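/- Let q' = p^ℓ be a prime power and let H be a subgroup of (ℤ/q'ℤ)^× of index at most m, where m is a positive integer. Then there exist integers g₁, g₂ whose residues modulo q' lie in H and which satisfy 2 < g₂ − g₁ < 12m + 6. -/

import Mathlib

private lemma stmt_10_aux (q m : ℕ) (hm : 0 < m) (hq2 : 2 ≤ q)
    (htot : q ≤ 2 * q.totient) [NeZero q]
    (H : Subgroup (ZMod q)ˣ) (hH : H.index ≤ m) :
    ∃ g₁ g₂ : ℤ,
      (∃ u₁ ∈ H, ((u₁ : (ZMod q)ˣ) : ZMod q) = (g₁ : ZMod q)) ∧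
      (∃ u₂ ∈ H, ((u₂ : (ZMod q)ˣ) : ZMod q) = (g₂ : ZMod q)) ∧
      2 < g₂ - g₁ ∧ g₂ - g₁ < 12 * m + 6 := by
  classical
  by_cases hsmall : q ≤ 12 * m + 5
  · -- small modulus: use 1 ∈ H and a multiple of q as the gap
    set t : ℕ := if 3 ≤ q then q else 2 * q with ht
    have htq : (t : ZMod q) = 0 := by
      rcases le_or_gt 3 q with h | h
      · simp [ht, h, ZMod.natCast_self]
      · simp only [ht, if_neg (not_le.mpr h)]
        push_cast [ZMod.natCast_self]
        ring
    have ht3 : 3 ≤ t := by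
      rcases le_or_gt 3 q with h | h
      · simp only [ht, if_pos h]; omega
      · simp only [ht, if_neg (not_le.mpr h)]; omega
    have ht5 : t ≤ 12 * m + 5 := by
      rcases le_or_gt 3 q with h | h
      · simp only [ht, if_pos h]; omega
      · simp only [ht, if_neg (not_le.mpr h)]; omega
    refine ⟨1, 1 + t, ⟨1, H.one_mem, by push_cast; simp⟩,
      ⟨1, H.one_mem, ?_⟩, by omega, by omega⟩
    push_cast [htq]
    simp
  · push_neg at hsmall
    -- large modulus
    set S : Finset (ZMod q) :=
      Finset.image (fun u : H => ((u : (ZMod q)ˣ) : ZMod q)) Finset.univ with hS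
    have hmemS : ∀ x, x ∈ S ↔ ∃ u ∈ H, ((u : (ZMod q)ˣ) : ZMod q) = x := by
      intro x
      simp only [hS, Finset.mem_image, Finset.mem_univ, true_and, Subtype.exists]
      exact ⟨fun ⟨a, ha, h⟩ => ⟨a, ha, h⟩, fun ⟨a, ha, h⟩ => ⟨a, ha, h⟩⟩
    have hScard : S.card = Nat.card H := by
      rw [hS, Finset.card_image_of_injective _ (fun a b hab => Subtype.ext (Units.ext hab)),
        Finset.card_univ, Nat.card_eq_fintype_card]
    -- lower bound on |S|
    have hlow : q ≤ 2 * m * S.card := by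
      have h1 : Nat.card H * H.index = Nat.card (ZMod q)ˣ := H.card_mul_index
      have h2 : Nat.card (ZMod q)ˣ = q.totient := by
        rw [Nat.card_eq_fintype_card, ZMod.card_units_eq_totient]
      have h3 : q.totient ≤ Nat.card H * m := by
        rw [← h2, ← h1]
        exact Nat.mul_le_mul_left _ hH
      calc q ≤ 2 * q.totient := htot
      _ ≤ 2 * (Nat.card H * m) := Nat.mul_le_mul_left _ h3
      _ = 2 * m * S.card := by rw [hScard]; ring
    -- key combinatorial step
    have key : ∃ x ∈ S, ∃ t : ℕ, 3 ≤ t ∧ t ≤ 12 * m + 5 ∧ x + (t : ZMod q) ∈ S := by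
      by_contra hC
      push_neg at hC
      -- the map x ↦ (x.val / (12m+5), x.val % 3) is injective on S
      have hfin : Set.InjOn (fun x : ZMod q => (x.val / (12 * m + 5), x.val % 3)) S := by
        have main : ∀ x ∈ S, ∀ y ∈ S, x.val < y.val →
            (x.val / (12 * m + 5), x.val % 3) = (y.val / (12 * m + 5), y.val % 3) → False := by
          intro x hx y hy hlt hfeq
          have hdiv : x.val / (12 * m + 5) = y.val / (12 * m + 5) := congrArg Prod.fst hfeq
          have hmod : x.val % 3 = y.val % 3 := congrArg Prod.snd hfeq
          set d : ℕ := y.val - x.val with hd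
          have hdlt : d < 12 * m + 5 := by
            by_contra hge
            push_neg at hge
            have hle : x.val + (12 * m + 5) ≤ y.val := by omega
            have h2 : (x.val + (12 * m + 5)) / (12 * m + 5) ≤ y.val / (12 * m + 5) :=
              Nat.div_le_div_right hle
            rw [Nat.add_div_right _ (by omega)] at h2
            omega
          have hd3 : 3 ≤ d := by omega
          have hxy : x + (d : ZMod q) = y := by
            have h1 : (x.val : ZMod q) = x := ZMod.natCast_zmod_val x
            have h2 : (y.val : ZMod q) = y := ZMod.natCast_zmod_val y
            have h3 : x.val + d = y.val := by omega
            calc x + (d : ZMod q) = ((x.val + d : ℕ) : ZMod q) := by push_cast [h1]; ring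
            _ = ((y.val : ℕ) : ZMod q) := by rw [h3]
            _ = y := h2
          exact hC x hx d hd3 (by omega) (hxy ▸ hy)
        intro x hx y hy hfeq
        rcases lt_trichotomy x.val y.val with h | h | h
        · exact absurd hfeq (fun hf => main x hx y hy h hf)
        · exact ZMod.val_injective q h
        · exact absurd hfeq.symm (fun hf => main y hy x hx h hf)
      -- hence |S| ≤ 3 * ((q-1)/(12m+5) + 1)
      have hcard : S.card ≤ 3 * ((q - 1) / (12 * m + 5) + 1) := by
        have himage : S.card ≤
            ((Finset.range ((q - 1) / (12 * m + 5) + 1)) ×ˢ (Finset.range 3)).card := by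
          apply Finset.card_le_card_of_injOn (fun x => (x.val / (12 * m + 5), x.val % 3))
          · intro x hx
            simp only [Finset.mem_coe, Finset.mem_product, Finset.mem_range]
            constructor
            · have : x.val ≤ q - 1 := by have := ZMod.val_lt x; omega
              exact Nat.lt_succ_of_le (Nat.div_le_div_right this)
            · exact Nat.mod_lt _ (by norm_num)
          · exact hfin
        simpa [Finset.card_product, Finset.card_range, mul_comm] using himage
      -- arithmetic contradiction
      set B : ℕ := (q - 1) / (12 * m + 5) with hB
      have hB0 : B * (12 * m + 5) ≤ q - 1 := Nat.div_mul_le_self _ _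
      have h1 : q ≤ 2 * m * (3 * (B + 1)) :=
        le_trans hlow (Nat.mul_le_mul_left _ hcard)
      have h2 : 2 * m * (3 * (B + 1)) = 6 * (m * B) + 6 * m := by ring
      have h3 : B * (12 * m + 5) = 12 * (m * B) + 5 * B := by ring
      omega
    obtain ⟨x, hx, t, ht3, ht5, hxt⟩ := key
    obtain ⟨u₁, hu₁, hu₁x⟩ := (hmemS x).mp hx
    obtain ⟨u₂, hu₂, hu₂x⟩ := (hmemS _).mp hxt
    refine ⟨(x.val : ℤ), (x.val : ℤ) + t, ⟨u₁, hu₁, ?_⟩, ⟨u₂, hu₂, ?_⟩, by omega, by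
      have : (t : ℤ) < 12 * m + 6 := by exact_mod_cast Nat.lt_succ_of_le ht5
      omega⟩
    · rw [hu₁x]
      push_cast
      rw [ZMod.natCast_zmod_val]
    · rw [hu₂x]
      push_cast
      rw [ZMod.natCast_zmod_val]

theorem stmt_10 (p : ℕ) (hp : p.Prime) (ℓ : ℕ) (hℓ : 1 ≤ ℓ)
    (m : ℕ) (hm : 0 < m)
    (H : Subgroup (ZMod (p ^ ℓ))ˣ) (hH : H.index ≤ m) :
    ∃ g₁ g₂ : ℤ,
      (∃ u₁ ∈ H, ((u₁ : (ZMod (p ^ ℓ))ˣ) : ZMod (p ^ ℓ)) = (g₁ : ZMod (p ^ ℓ))) ∧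
      (∃ u₂ ∈ H, ((u₂ : (ZMod (p ^ ℓ))ˣ) : ZMod (p ^ ℓ)) = (g₂ : ZMod (p ^ ℓ))) ∧
      2 < g₂ - g₁ ∧ g₂ - g₁ < 12 * m + 6 := by
  haveI : NeZero (p ^ ℓ) := ⟨pow_ne_zero _ hp.pos.ne'⟩
  have hq2 : 2 ≤ p ^ ℓ := by
    calc 2 ≤ p := hp.two_le
    _ = p ^ 1 := (pow_one p).symm
    _ ≤ p ^ ℓ := Nat.pow_le_pow_right hp.pos hℓ
  have htot : p ^ ℓ ≤ 2 * (p ^ ℓ).totient := by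
    rw [Nat.totient_prime_pow hp hℓ]
    have hp2 := hp.two_le
    calc p ^ ℓ = p ^ (ℓ - 1) * p := by rw [← pow_succ]; congr 1; omega
    _ ≤ p ^ (ℓ - 1) * (2 * (p - 1)) := Nat.mul_le_mul_left _ (by omega)
    _ = 2 * (p ^ (ℓ - 1) * (p - 1)) := by ring
  exact stmt_10_aux (p ^ ℓ) m hm hq2 htot H hH
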